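/- Let E, E' ⊆ {1,…,2n} satisfy E = E^⊥ and E' = E'^⊥ (so #E = #E' = n, and the coordinate subspaces they span are maximal totally isotropic for the split symmetric form). Then there exists σ ∈ W° with σ(E) = E' if and only if #(E ∖ E') is even. -/

import Mathlib

open Finset

namespace OrthLM

/-- The star operation `E* = {i* : i ∈ E}` with `i* = 2n+1-i` (0-indexed: `Fin.rev`). -/
def fstar {N : ℕ} (E : Finset (Fin N)) : Finset (Fin N) := E.image Fin.rev

/-- The perp operation `E^⊥ = (Eᶜ)* = (E*)ᶜ`. -/
def fperp {N : ℕ} (E : Finset (Fin N)) : Finset (Fin N) := fstar Eᶜ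

/-- The set `A_i = {1,…,i} ∪ {i*,…,2n}` (0-indexed: `{j : j < i or 2n - i ≤ j}`). -/
def Aset (n : ℕ) (i : ℕ) : Finset (Fin (2*n)) :=
  univ.filter fun j => (j:ℕ) < i ∨ 2*n - i ≤ (j:ℕ)

/-- Membership in `S^h_{2n}`: permutations commuting with `i ↦ i*`. -/
def inSh (n : ℕ) (σ : Equiv.Perm (Fin (2*n))) : Prop :=
  ∀ i, σ i.rev = (σ i).rev

/-- Membership in `W°`: elements of `S^h_{2n}` that are even as permutations. -/
def inW0 (n : ℕ) (σ : Equiv.Perm (Fin (2*n))) : Prop :=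
  inSh n σ ∧ Equiv.Perm.sign σ = 1

section Aux

variable {N : ℕ}

lemma mem_image_rev {S : Finset (Fin N)} {i : Fin N} :
    i ∈ S.image Fin.rev ↔ Fin.rev i ∈ S := by
  constructor
  · rintro h
    rw [Finset.mem_image] at h
    obtain ⟨a, ha, rfl⟩ := h
    rwa [Fin.rev_rev]
  · intro h
    exact Finset.mem_image.2 ⟨Fin.rev i, h, Fin.rev_rev i⟩

lemma rev_ne (hN : N % 2 = 0) (i : Fin N) : Fin.rev i ≠ i := by
  intro h
  have := congrArg Fin.val h
  rw [Fin.val_rev] at this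
  have hi := i.isLt
  omega

lemma lag_mem {E : Finset (Fin N)} (hE : E = fperp E) :
    ∀ i, i ∈ E ↔ Fin.rev i ∉ E := by
  intro i
  conv_lhs => rw [hE]
  rw [fperp, fstar, mem_image_rev, Finset.mem_compl]

def revSwapFun (S : Finset (Fin N)) (i : Fin N) : Fin N := if i ∈ S then i.rev else i

lemma revSwap_inv (S : Finset (Fin N)) (hS : ∀ i ∈ S, Fin.rev i ∈ S) :
    Function.Involutive (revSwapFun S) := by
  intro i
  unfold revSwapFun
  by_cases h : i ∈ S
  · rw [if_pos h, if_pos (hS i h), Fin.rev_rev]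
  · rw [if_neg h, if_neg h]

def revSwap (S : Finset (Fin N)) (hS : ∀ i ∈ S, Fin.rev i ∈ S) : Equiv.Perm (Fin N) :=
  Function.Involutive.toPerm _ (revSwap_inv S hS)

lemma revSwap_apply (S : Finset (Fin N)) (hS : ∀ i ∈ S, Fin.rev i ∈ S) (i : Fin N) :
    revSwap S hS i = if i ∈ S then i.rev else i := rfl

lemma sign_revSwap (hne : ∀ i : Fin N, Fin.rev i ≠ i) :
    ∀ (T : Finset (Fin N)), (∀ i ∈ T, Fin.rev i ∉ T) →
      ∀ hS : (∀ i ∈ T ∪ T.image Fin.rev, Fin.rev i ∈ T ∪ T.image Fin.rev),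
      Equiv.Perm.sign (revSwap (T ∪ T.image Fin.rev) hS) = (-1) ^ T.card := by
  intro T
  induction T using Finset.induction_on with
  | empty =>
    intro _ hS
    have : revSwap (∅ ∪ (∅ : Finset (Fin N)).image Fin.rev) hS = 1 := by
      apply Equiv.ext
      intro i
      rw [revSwap_apply, if_neg (by simp)]
      rfl
    rw [this]
    simp
  | @insert a T' ha ih =>
    intro hT hS
    have haT' : Fin.rev a ∉ T' := by
      have := hT a (Finset.mem_insert_self a T')
      intro h; exact this (Finset.mem_insert_of_mem h)
    have haT'' : a ∉ T'.image Fin.rev := by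
      rw [mem_image_rev]; exact haT'
    have harT'' : Fin.rev a ∉ T'.image Fin.rev := by
      rw [mem_image_rev, Fin.rev_rev]; exact ha
    have hT' : ∀ i ∈ T', Fin.rev i ∉ T' := fun i hi h =>
      hT i (Finset.mem_insert_of_mem hi) (Finset.mem_insert_of_mem h)
    have hS' : ∀ i ∈ T' ∪ T'.image Fin.rev, Fin.rev i ∈ T' ∪ T'.image Fin.rev := by
      intro i hi
      rcases Finset.mem_union.1 hi with h | h
      · exact Finset.mem_union_right _ (mem_image_rev.2 (by rwa [Fin.rev_rev]))
      · exact Finset.mem_union_left _ (mem_image_rev.1 h)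
    have hanS : a ∉ T' ∪ T'.image Fin.rev := by
      rw [Finset.mem_union]; push_neg; exact ⟨ha, haT''⟩
    have harnS : Fin.rev a ∉ T' ∪ T'.image Fin.rev := by
      rw [Finset.mem_union]; push_neg; exact ⟨haT', harT''⟩
    have hmemS : ∀ i : Fin N, i ∈ insert a T' ∪ (insert a T').image Fin.rev ↔
        i = a ∨ i = Fin.rev a ∨ i ∈ T' ∪ T'.image Fin.rev := by
      intro i
      simp only [Finset.image_insert, Finset.mem_union, Finset.mem_insert, mem_image_rev]
      tauto
    have key : revSwap (insert a T' ∪ (insert a T').image Fin.rev) hS =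
        Equiv.swap a (Fin.rev a) * revSwap (T' ∪ T'.image Fin.rev) hS' := by
      apply Equiv.ext
      intro i
      rw [Equiv.Perm.mul_apply, revSwap_apply, revSwap_apply]
      by_cases h1 : i = a
      · subst h1
        rw [if_pos ((hmemS _).2 (Or.inl rfl)), if_neg hanS, Equiv.swap_apply_left]
      · by_cases h2 : i = Fin.rev a
        · subst h2
          rw [if_pos ((hmemS _).2 (Or.inr (Or.inl rfl))), Fin.rev_rev,
            if_neg harnS, Equiv.swap_apply_right]
        · by_cases h3 : i ∈ T' ∪ T'.image Fin.rev
          · rw [if_pos ((hmemS _).2 (Or.inr (Or.inr h3))), if_pos h3]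
            rw [Equiv.swap_apply_of_ne_of_ne]
            · intro h; exact h2 (by rw [← h, Fin.rev_rev])
            · intro h; exact h1 (Fin.rev_injective h)
          · rw [if_neg (by rw [hmemS]; push_neg; exact ⟨h1, h2, h3⟩), if_neg h3,
              Equiv.swap_apply_of_ne_of_ne h1 h2]
    rw [key, map_mul, ih hT' hS', Equiv.Perm.sign_swap (Ne.symm (hne a)),
      Finset.card_insert_of_notMem ha, pow_succ]
    exact mul_comm _ _

lemma sign_stab (τ : Equiv.Perm (Fin N)) (hsh : ∀ i, τ i.rev = (τ i).rev)
    (E : Finset (Fin N)) (hLag : ∀ i, i ∈ E ↔ Fin.rev i ∉ E)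
    (hmem : ∀ i, i ∈ E ↔ τ i ∈ E) :
    Equiv.Perm.sign τ = 1 := by
  set p : Fin N → Prop := fun i => i ∈ E with hp
  have hmem' : ∀ i, p (τ i) ↔ p i := fun i => (hmem i).symm
  set a : Equiv.Perm (Fin N) := Equiv.Perm.ofSubtype (τ.subtypePerm hmem') with hadef
  set ρ : Equiv.Perm (Fin N) := Fin.revPerm with hρ
  have hρ_apply : ∀ i : Fin N, ρ i = Fin.rev i := fun i => rfl
  have hρ_inv : ρ⁻¹ = ρ := rfl
  have ha_mem : ∀ i, i ∈ E → a i = τ i := by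
    intro i hi
    exact Equiv.Perm.ofSubtype_apply_of_mem (τ.subtypePerm hmem') hi
  have ha_nmem : ∀ i, i ∉ E → a i = i := by
    intro i hi
    exact Equiv.Perm.ofSubtype_apply_of_not_mem (τ.subtypePerm hmem') hi
  have hdecomp : τ = a * (ρ * a * ρ⁻¹) := by
    apply Equiv.ext
    intro i
    simp only [Equiv.Perm.mul_apply, hρ_inv]
    by_cases hi : i ∈ E
    · have h1 : Fin.rev i ∉ E := (hLag i).1 hi
      simp only [hρ_apply]
      rw [ha_nmem _ h1, Fin.rev_rev, ha_mem _ hi]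
    · have h1 : Fin.rev i ∈ E := by
        by_contra h
        exact hi ((hLag i).2 h)
      simp only [hρ_apply]
      rw [ha_mem _ h1, hsh i, Fin.rev_rev, ha_nmem _ (fun h => hi ((hmem i).2 h))]
  have h2 : Equiv.Perm.sign τ = Equiv.Perm.sign a * (Equiv.Perm.sign ρ *
      Equiv.Perm.sign a * (Equiv.Perm.sign ρ)⁻¹) := by
    rw [hdecomp]
    simp [map_mul]
  rw [h2]
  have h3 : Equiv.Perm.sign ρ * Equiv.Perm.sign a * (Equiv.Perm.sign ρ)⁻¹
      = Equiv.Perm.sign a := by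
    rw [mul_comm (Equiv.Perm.sign ρ), mul_assoc, mul_inv_cancel]
    exact mul_one _
  rw [h3, ← sq]
  exact Int.units_sq _

lemma perm_image_mem [DecidableEq (Fin N)] (π : Equiv.Perm (Fin N))
    {A B : Finset (Fin N)} (h : A.image (fun x => π x) = B) :
    ∀ i, i ∈ A ↔ π i ∈ B := by
  intro i
  constructor
  · intro hi
    rw [← h]
    exact Finset.mem_image_of_mem _ hi
  · intro hi
    rw [← h, Finset.mem_image] at hi
    obtain ⟨y, hy, hyi⟩ := hi
    rwa [← π.injective hyi]

end Aux

/-- Let `E, E' ⊆ {1,…,2n}` with `E = E^⊥`, `E' = E'^⊥`.  Then there is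
`σ ∈ W°` with `σ(E) = E'` iff `#(E ∖ E')` is even. -/
theorem lagrangian_conjugate_iff_even (n : ℕ) (hn : 2 ≤ n)
    (E E' : Finset (Fin (2*n))) (hE : E = fperp E) (hE' : E' = fperp E') :
    (∃ σ : Equiv.Perm (Fin (2*n)), inW0 n σ ∧ E.image (fun x => σ x) = E') ↔
      Even (E \ E').card := by
  have hne : ∀ i : Fin (2*n), Fin.rev i ≠ i := rev_ne (by omega)
  have hmE : ∀ i, i ∈ E ↔ Fin.rev i ∉ E := lag_mem hE
  have hmE' : ∀ i, i ∈ E' ↔ Fin.rev i ∉ E' := lag_mem hE'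
  have hrE : ∀ i, Fin.rev i ∈ E ↔ i ∉ E := by
    intro i; rw [hmE (Fin.rev i), Fin.rev_rev]
  have hrE' : ∀ i, Fin.rev i ∈ E' ↔ i ∉ E' := by
    intro i; rw [hmE' (Fin.rev i), Fin.rev_rev]
  have hT : ∀ i ∈ E \ E', Fin.rev i ∉ E \ E' := by
    intro i hi h
    rw [Finset.mem_sdiff] at hi h
    exact ((hrE i).1 h.1) hi.1
  have hS : ∀ i ∈ (E \ E') ∪ (E \ E').image Fin.rev,
      Fin.rev i ∈ (E \ E') ∪ (E \ E').image Fin.rev := by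
    intro i hi
    rcases Finset.mem_union.1 hi with h | h
    · exact Finset.mem_union_right _ (mem_image_rev.2 (by rwa [Fin.rev_rev]))
    · exact Finset.mem_union_left _ (mem_image_rev.1 h)
  set σ₀ : Equiv.Perm (Fin (2*n)) := revSwap ((E \ E') ∪ (E \ E').image Fin.rev) hS
    with hσ₀def
  have hσ₀apply : ∀ i, σ₀ i =
      if i ∈ (E \ E') ∪ (E \ E').image Fin.rev then Fin.rev i else i :=
    revSwap_apply _ hS
  have hσ₀inv : ∀ i, σ₀ (σ₀ i) = i := revSwap_inv _ hS
  have hSmem : ∀ i : Fin (2*n), i ∈ (E \ E') ∪ (E \ E').image Fin.rev ↔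
      (i ∈ E ∧ i ∉ E') ∨ (i ∈ E' ∧ i ∉ E) := by
    intro i
    have h1 := hrE i
    have h2 := hrE' i
    rw [Finset.mem_union, mem_image_rev, Finset.mem_sdiff, Finset.mem_sdiff]
    tauto
  have hσ₀mem : ∀ i : Fin (2*n), σ₀ i ∈ E' ↔ i ∈ E := by
    intro i
    have h1 := hrE i
    have h2 := hrE' i
    rw [hσ₀apply]
    by_cases h : i ∈ (E \ E') ∪ (E \ E').image Fin.rev
    · rw [if_pos h]
      have h3 := (hSmem i).1 h
      tauto
    · rw [if_neg h]
      rw [hSmem] at h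
      tauto
  have hσ₀mem2 : ∀ i : Fin (2*n), σ₀ i ∈ E ↔ i ∈ E' := by
    intro i
    have h1 := hrE i
    have h2 := hrE' i
    rw [hσ₀apply]
    by_cases h : i ∈ (E \ E') ∪ (E \ E').image Fin.rev
    · rw [if_pos h]
      have h3 := (hSmem i).1 h
      tauto
    · rw [if_neg h]
      rw [hSmem] at h
      tauto
  have hσ₀sh : inSh n σ₀ := by
    intro i
    rw [hσ₀apply, hσ₀apply]
    by_cases h : i ∈ (E \ E') ∪ (E \ E').image Fin.rev
    · rw [if_pos (hS i h), if_pos h]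
    · have h2 : Fin.rev i ∉ (E \ E') ∪ (E \ E').image Fin.rev := by
        intro hc
        have := hS _ hc
        rw [Fin.rev_rev] at this
        exact h this
      rw [if_neg h2, if_neg h]
  have himg₀ : E.image (fun x => σ₀ x) = E' := by
    apply Finset.ext
    intro j
    rw [Finset.mem_image]
    constructor
    · rintro ⟨x, hx, rfl⟩
      exact (hσ₀mem x).2 hx
    · intro hj
      exact ⟨σ₀ j, (hσ₀mem2 j).2 hj, hσ₀inv j⟩
  have hsignσ₀ : Equiv.Perm.sign σ₀ = (-1) ^ (E \ E').card :=
    sign_revSwap hne (E \ E') hT hS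
  constructor
  · rintro ⟨σ, ⟨hsh, hsg⟩, himgσ⟩
    set τ : Equiv.Perm (Fin (2*n)) := σ₀ * σ with hτdef
    have hτapply : ∀ i, τ i = σ₀ (σ i) := fun i => rfl
    have hmemτ : ∀ i, i ∈ E ↔ τ i ∈ E := by
      intro i
      rw [hτapply, perm_image_mem σ himgσ i]
      exact (hσ₀mem2 (σ i)).symm
    have hshτ : ∀ i, τ (Fin.rev i) = Fin.rev (τ i) := by
      intro i
      rw [hτapply, hτapply, hsh i, hσ₀sh (σ i)]
    have hsτ : Equiv.Perm.sign τ = 1 := sign_stab τ hshτ E hmE hmemτ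
    have hστ : σ₀ * τ = σ := by
      apply Equiv.ext
      intro i
      simp only [Equiv.Perm.mul_apply, hτdef]
      exact hσ₀inv (σ i)
    have hkey : (-1 : ℤˣ) ^ (E \ E').card = 1 := by
      have h0 := congrArg Equiv.Perm.sign hστ
      rw [map_mul, hsτ, mul_one, hsignσ₀, hsg] at h0
      exact h0
    rcases Nat.even_or_odd (E \ E').card with h | h
    · exact h
    · exfalso
      rw [h.neg_one_pow] at hkey
      exact absurd hkey (by decide)
  · intro h
    exact ⟨σ₀, ⟨hσ₀sh, by rw [hsignσ₀]; exact h.neg_one_pow⟩, himg₀⟩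

end OrthLM
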